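/- Let a finite group K act simplicially on a tree T (without edge inversions), with T nonempty. Then the fixed-point subgraph T^K is a nonempty subtree; in particular, K fixes a vertex or an edge of T. -/

import Mathlib

open SimpleGraph

namespace Stmt13Aux

variable {V : Type*} {T : SimpleGraph V}

/-- In a tree, every path realizes the distance. -/
lemma path_len (hc : T.Connected) (ha : T.IsAcyclic) {u v : V} {p : T.Walk u v}
    (hp : p.IsPath) : p.length = T.dist u v := by
  obtain ⟨q, hq, hql⟩ := hc.exists_path_of_dist u v
  have h := ha.path_unique ⟨p, hp⟩ ⟨q, hq⟩
  have : p = q := Subtype.ext_iff.mp h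
  rw [this, hql]

/-- A vertex on a geodesic splits the distance additively. -/
lemma mem_support_dist (hc : T.Connected) {y u v : V} {p : T.Walk y u}
    (hlen : p.length = T.dist y u) (hv : v ∈ p.support) :
    T.dist y v + T.dist v u = T.dist y u := by
  classical
  have hsplit : (p.takeUntil v hv).length + (p.dropUntil v hv).length = p.length := by
    conv_rhs => rw [← p.take_spec hv]
    rw [Walk.length_append]
  have h1 := SimpleGraph.dist_le (p.takeUntil v hv)
  have h2 := SimpleGraph.dist_le (p.dropUntil v hv)
  have h3 := hc.dist_triangle (u := y) (v := v) (w := u)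
  omega

/-- Distances to the two endpoints of an edge differ by exactly one. -/
lemma step (hc : T.Connected) (ha : T.IsAcyclic) {y u v : V} (h : T.Adj u v) :
    T.dist y u = T.dist y v + 1 ∨ T.dist y v = T.dist y u + 1 := by
  obtain ⟨p, hp, hlen⟩ := hc.exists_path_of_dist y u
  by_cases hv : v ∈ p.support
  · left
    have h1 := mem_support_dist hc hlen hv
    have h2 : T.dist v u = 1 := SimpleGraph.dist_eq_one_iff_adj.mpr h.symm
    omega
  · right
    have hqp : (p.concat h).IsPath := by
      rw [← Walk.isPath_reverse_iff, Walk.reverse_concat, Walk.cons_isPath_iff]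
      exact ⟨hp.reverse, by simpa [Walk.support_reverse] using hv⟩
    have h1 := path_len hc ha hqp
    rw [Walk.length_concat, hlen] at h1
    omega

/-- A vertex of a tree cannot have two distinct neighbours both strictly
closer to a given vertex `y`. -/
lemma no_two_closer (hc : T.Connected) (ha : T.IsAcyclic) {y u v m : V}
    (hum : T.Adj u m) (hvm : T.Adj v m) (huv : u ≠ v)
    (h1 : T.dist y m = T.dist y u + 1) (h2 : T.dist y m = T.dist y v + 1) : False := by
  obtain ⟨p, hp, hpl⟩ := hc.exists_path_of_dist y u
  obtain ⟨q, hq, hql⟩ := hc.exists_path_of_dist y v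
  have hm1 : m ∉ p.support := by
    intro hm
    have hs := mem_support_dist hc hpl hm
    have : T.dist m u = 1 := SimpleGraph.dist_eq_one_iff_adj.mpr hum.symm
    omega
  have hm2 : m ∉ q.support := by
    intro hm
    have hs := mem_support_dist hc hql hm
    have : T.dist m v = 1 := SimpleGraph.dist_eq_one_iff_adj.mpr hvm.symm
    omega
  have hP : (p.concat hum).IsPath := by
    rw [← Walk.isPath_reverse_iff, Walk.reverse_concat, Walk.cons_isPath_iff]
    exact ⟨hp.reverse, by simpa [Walk.support_reverse] using hm1⟩
  have hQ : (q.concat hvm).IsPath := by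
    rw [← Walk.isPath_reverse_iff, Walk.reverse_concat, Walk.cons_isPath_iff]
    exact ⟨hq.reverse, by simpa [Walk.support_reverse] using hm2⟩
  have hPQ : p.concat hum = q.concat hvm :=
    Subtype.ext_iff.mp (ha.path_unique ⟨_, hP⟩ ⟨_, hQ⟩)
  have hrev : (p.concat hum).reverse = (q.concat hvm).reverse := by rw [hPQ]
  rw [Walk.reverse_concat, Walk.reverse_concat] at hrev
  have := congrArg (fun w : T.Walk m y => w.getVert 1) hrev
  simp only [Walk.getVert_cons_succ, Walk.getVert_zero] at this
  exact huv this

lemma dist_getVert_le (hc : T.Connected) :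
    ∀ {u v : V} (p : T.Walk u v) (i : ℕ), i ≤ p.length →
      T.dist u (p.getVert i) ≤ i ∧ T.dist (p.getVert i) v + i ≤ p.length := by
  intro u v p
  induction p with
  | nil =>
    intro i hi
    have hi0 : i = 0 := by simpa using hi
    subst hi0
    simp [SimpleGraph.dist_self]
  | @cons a b w h q ih =>
    intro i hi
    cases i with
    | zero =>
      refine ⟨by simp [SimpleGraph.dist_self], ?_⟩
      simpa using SimpleGraph.dist_le (Walk.cons h q)
    | succ i =>
      have hi' : i ≤ q.length := by simpa [Walk.length_cons] using hi
      obtain ⟨ih1, ih2⟩ := ih i hi'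
      constructor
      · have htri := hc.dist_triangle (u := a) (v := b) (w := q.getVert i)
        have hab : T.dist a b = 1 := SimpleGraph.dist_eq_one_iff_adj.mpr h
        simp only [Walk.getVert_cons_succ]
        omega
      · simp only [Walk.getVert_cons_succ, Walk.length_cons]
        omega

lemma geo_getVert (hc : T.Connected) {u v : V} {p : T.Walk u v}
    (hlen : p.length = T.dist u v) {i : ℕ} (hi : i ≤ p.length) :
    T.dist u (p.getVert i) = i ∧ T.dist (p.getVert i) v = p.length - i := by
  obtain ⟨h1, h2⟩ := dist_getVert_le hc p i hi
  have htri := hc.dist_triangle (u := u) (v := p.getVert i) (w := v)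
  omega

lemma getVert_inj (hc : T.Connected) {u v : V} {p : T.Walk u v}
    (hlen : p.length = T.dist u v) {i j : ℕ} (hi : i ≤ p.length) (hj : j ≤ p.length)
    (hij : i ≠ j) : p.getVert i ≠ p.getVert j := by
  intro hEq
  have h1 := (geo_getVert hc hlen hi).1
  have h2 := (geo_getVert hc hlen hj).1
  rw [hEq] at h1
  omega

/-- Along a geodesic, the distance function to `y` first decreases then increases;
applied to the vertex at position 1. -/
lemma unimodal (hc : T.Connected) (ha : T.IsAcyclic) {c₁ c₂ : V} {p : T.Walk c₁ c₂}
    (hlen : p.length = T.dist c₁ c₂) (hn : 2 ≤ p.length) (y : V) :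
    T.dist y c₁ = T.dist y (p.getVert 1) + 1 ∨
      T.dist y c₂ = T.dist y (p.getVert 1) + (p.length - 1) := by
  have hadj0 : T.Adj c₁ (p.getVert 1) := by
    have := p.adj_getVert_succ (i := 0) (by omega)
    simpa [p.getVert_zero] using this
  rcases step hc ha (y := y) hadj0 with h | h
  · exact Or.inl h
  · right
    have key : ∀ j, j + 1 ≤ p.length →
        T.dist y (p.getVert (j + 1)) = T.dist y (p.getVert j) + 1 := by
      intro j
      induction j with
      | zero => intro _; simpa [p.getVert_zero] using h
      | succ j ih =>
        intro hj1
        have hQ := ih (by omega)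
        have hadj : T.Adj (p.getVert (j + 1)) (p.getVert (j + 2)) :=
          p.adj_getVert_succ (i := j + 1) (by omega)
        rcases step hc ha (y := y) hadj with hbad | hgood
        · exfalso
          have hadj' : T.Adj (p.getVert j) (p.getVert (j + 1)) :=
            p.adj_getVert_succ (i := j) (by omega)
          have hne : p.getVert j ≠ p.getVert (j + 2) :=
            getVert_inj hc hlen (by omega) (by omega) (by omega)
          exact no_two_closer hc ha hadj' hadj.symm hne hQ hbad
        · exact hgood
    have tele : ∀ j, j + 1 ≤ p.length →
        T.dist y (p.getVert (j + 1)) = T.dist y (p.getVert 1) + j := by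
      intro j
      induction j with
      | zero => intro _; simp
      | succ j ih =>
        intro hj
        have h1 := key (j + 1) hj
        have h2 := ih (by omega)
        omega
    have := tele (p.length - 1) (by omega)
    have hl : p.length - 1 + 1 = p.length := by omega
    rw [hl, p.getVert_length] at this
    exact this

/-- A walk whose support lies in `S` yields reachability in the induced graph. -/
lemma reachable_induce {S : Set V} :
    ∀ {a b : V} (w : T.Walk a b) (hs : ∀ x ∈ w.support, x ∈ S),
      (T.induce S).Reachable ⟨a, hs a w.start_mem_support⟩ ⟨b, hs b w.end_mem_support⟩ := by
  intro a b w
  induction w with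
  | nil => intro hs; rfl
  | @cons a x b h q ih =>
    intro hs
    have hx : ∀ z ∈ q.support, z ∈ S := fun z hz => hs z (by simp [hz])
    have hadj : (T.induce S).Adj ⟨a, hs a (Walk.cons h q).start_mem_support⟩
        ⟨x, hx x q.start_mem_support⟩ := h
    exact hadj.reachable.trans (ih hx)

end Stmt13Aux

open Stmt13Aux

/-- Let a finite group `K` act on a (possibly infinite, nonempty) tree
`T` by graph automorphisms, without edge inversions.  Then the fixed-point subgraph `T^K`
is a nonempty subtree: the set of fixed vertices is nonempty and induces a connected
subgraph of `T`.  In particular `K` fixes a vertex (or an edge) of `T`. -/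
theorem stmt_13 {V : Type*} (T : SimpleGraph V) (hT : T.IsTree)
    (K : Type*) [Group K] [Finite K] [MulAction K V]
    (hact : ∀ (k : K) (u v : V), T.Adj u v → T.Adj (k • u) (k • v))
    (hnoinv : ∀ (k : K) (u v : V), T.Adj u v → k • u = v → k • v ≠ u) :
    ({v : V | ∀ k : K, k • v = v}).Nonempty ∧
      (T.induce {v : V | ∀ k : K, k • v = v}).Connected := by
  classical
  obtain ⟨hc, ha⟩ := hT
  have _ : Fintype K := Fintype.ofFinite K
  have _ : Nonempty V := hc.nonempty
  let f : K → T →g T := fun k => ⟨fun v => k • v, fun h => hact k _ _ h⟩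
  have dist_smul_le : ∀ (k : K) (u v : V), T.dist (k • u) (k • v) ≤ T.dist u v := by
    intro k u v
    obtain ⟨p, hp⟩ := (hc u v).exists_walk_length_eq_dist
    have := SimpleGraph.dist_le (p.map (f k))
    rwa [Walk.length_map, hp] at this
  have dist_smul : ∀ (k : K) (u v : V), T.dist (k • u) (k • v) = T.dist u v := by
    intro k u v
    refine le_antisymm (dist_smul_le k u v) ?_
    have := dist_smul_le k⁻¹ (k • u) (k • v)
    simpa using this
  obtain ⟨x₀⟩ := ‹Nonempty V›
  set r : V → ℕ := fun x => Finset.univ.sup fun k : K => T.dist x (k • x₀) with hr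
  have r_le : ∀ {x n}, (∀ k : K, T.dist x (k • x₀) ≤ n) → r x ≤ n :=
    fun h => Finset.sup_le fun k _ => h k
  have le_r : ∀ (x) (k : K), T.dist x (k • x₀) ≤ r x := fun x k =>
    Finset.le_sup (f := fun k : K => T.dist x (k • x₀)) (Finset.mem_univ k)
  have r_smul : ∀ (k : K) (x : V), r (k • x) = r x := by
    intro k x
    refine le_antisymm (r_le fun g => ?_) (r_le fun g => ?_)
    · have h1 : T.dist (k • x) (g • x₀) = T.dist x ((k⁻¹ * g) • x₀) := by
        rw [← dist_smul k⁻¹, mul_smul]; simp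
      rw [h1]; exact le_r x _
    · have h1 : T.dist x (g • x₀) = T.dist (k • x) ((k * g) • x₀) := by
        rw [mul_smul, dist_smul]
      rw [h1]; exact le_r (k • x) _
  set n₀ := sInf (Set.range r) with hn₀
  obtain ⟨c, hcmin⟩ : ∃ c, r c = n₀ := Nat.sInf_mem (Set.range_nonempty r)
  have close : ∀ c₁ c₂, r c₁ = n₀ → r c₂ = n₀ → T.dist c₁ c₂ ≤ 1 := by
    intro c₁ c₂ h₁ h₂
    by_contra hfar
    have h2 : 2 ≤ T.dist c₁ c₂ := by omega
    have hpos : 1 ≤ n₀ := by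
      by_contra h0
      have h0' : n₀ = 0 := by omega
      have e₁ : T.dist c₁ ((1 : K) • x₀) = 0 := by
        have := le_r c₁ (1 : K); omega
      have e₂ : T.dist c₂ ((1 : K) • x₀) = 0 := by
        have := le_r c₂ (1 : K); omega
      have hcx : c₁ = x₀ := by
        have := (hc.dist_eq_zero_iff (u := c₁) (v := (1 : K) • x₀)).mp e₁
        simpa using this
      have hcx' : c₂ = x₀ := by
        have := (hc.dist_eq_zero_iff (u := c₂) (v := (1 : K) • x₀)).mp e₂
        simpa using this
      rw [hcx, hcx'] at h2
      simp [SimpleGraph.dist_self] at h2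
    obtain ⟨p, hp, hlen⟩ := hc.exists_path_of_dist c₁ c₂
    have hn : 2 ≤ p.length := by omega
    have hlt : ∀ k : K, T.dist (p.getVert 1) (k • x₀) < n₀ := by
      intro k
      have e1 : T.dist (p.getVert 1) (k • x₀) = T.dist (k • x₀) (p.getVert 1) :=
        SimpleGraph.dist_comm
      have e2 : T.dist c₁ (k • x₀) = T.dist (k • x₀) c₁ := SimpleGraph.dist_comm
      have e3 : T.dist c₂ (k • x₀) = T.dist (k • x₀) c₂ := SimpleGraph.dist_comm
      have l1 := le_r c₁ k
      have l2 := le_r c₂ k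
      rcases unimodal hc ha hlen hn (k • x₀) with h | h
      · omega
      · have hd : 1 ≤ p.length - 1 := by omega
        omega
    have hrm : r (p.getVert 1) ≤ n₀ - 1 := r_le fun k => by have := hlt k; omega
    have := Nat.sInf_le (Set.mem_range_self (f := r) (p.getVert 1))
    omega
  have hfix : ∀ k : K, k • c = c := by
    intro k
    by_contra hkc
    set c' := k • c with hc'
    have hrc' : r c' = n₀ := by rw [hc', r_smul, hcmin]
    have hadj : T.Adj c c' := by
      rw [← SimpleGraph.dist_eq_one_iff_adj]
      have h1 := close c c' hcmin hrc'
      have h2 : T.dist c c' ≠ 0 := by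
        simp only [ne_eq, hc.dist_eq_zero_iff]
        exact fun h => hkc h.symm
      omega
    by_cases hkk : k • c' = c
    · exact hnoinv k c c' hadj hc'.symm hkk
    · by_cases hkk' : k • c' = c'
      · have hcc : c' = c := by
          have h2 : k • c' = k • c := by rw [hkk', hc']
          exact smul_left_cancel k h2
        exact hkc hcc
      · set c'' := k • c' with hc''
        have hrc'' : r c'' = n₀ := by rw [hc'', r_smul, hrc']
        have hadj2 : T.Adj c' c'' := by
          have := hact k c c' hadj
          rwa [← hc', ← hc''] at this
        have hadj3 : T.Adj c c'' := by
          rw [← SimpleGraph.dist_eq_one_iff_adj]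
          have h1 := close c c'' hcmin hrc''
          have h2 : T.dist c c'' ≠ 0 := by
            simp only [ne_eq, hc.dist_eq_zero_iff]
            exact fun h => hkk h.symm
          omega
        have hp1 : (Walk.cons hadj3 Walk.nil).IsPath := by
          simp [Walk.cons_isPath_iff, hadj3.ne]
        have hp2 : (Walk.cons hadj (Walk.cons hadj2 Walk.nil)).IsPath := by
          simp [Walk.cons_isPath_iff, hadj2.ne, hadj.ne, hadj3.ne]
        have hpq := ha.path_unique ⟨_, hp1⟩ ⟨_, hp2⟩
        have hw : (Walk.cons hadj3 Walk.nil) = (Walk.cons hadj (Walk.cons hadj2 Walk.nil)) :=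
          Subtype.ext_iff.mp hpq
        have := congrArg Walk.length hw
        simp at this
  refine ⟨⟨c, hfix⟩, ?_⟩
  set S : Set V := {v : V | ∀ k : K, k • v = v} with hS
  have hsupp : ∀ (u v : V), u ∈ S → v ∈ S → ∀ (p : T.Walk u v), p.IsPath →
      ∀ x ∈ p.support, x ∈ S := by
    intro u v hu hv p hp x hx k
    have hq : ((p.map (f k)).copy (hu k) (hv k)).IsPath := by
      rw [Walk.isPath_copy]
      exact Walk.map_isPath_of_injective (MulAction.injective k) hp
    have heq : p = (p.map (f k)).copy (hu k) (hv k) :=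
      Subtype.ext_iff.mp (ha.path_unique ⟨p, hp⟩ ⟨_, hq⟩)
    have hsup : p.support = p.support.map (fun z => k • z) := by
      conv_lhs => rw [heq]
      rw [Walk.support_copy, Walk.support_map]
      rfl
    obtain ⟨i, hi, hix⟩ := List.mem_iff_getElem.mp hx
    have hi' : i < (p.support.map (fun z => k • z)).length := by simpa using hi
    have hstep : p.support[i] = (p.support.map (fun z => k • z))[i]'hi' := by
      simp only [List.getElem_map]
      have := congrArg (fun l : List V => l[i]?) hsup
      simp only [List.getElem?_eq_getElem hi,
        List.getElem?_eq_getElem hi', List.getElem_map, Option.some.injEq] at this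
      simpa using this
    rw [List.getElem_map] at hstep
    rw [← hix]
    exact hstep.symm
  haveI hne : Nonempty ↥S := ⟨⟨c, hfix⟩⟩
  refine ⟨?_⟩
  rintro ⟨u, hu⟩ ⟨v, hv⟩
  obtain ⟨p, hp, -⟩ := hc.exists_path_of_dist u v
  exact reachable_induce p (hsupp u v hu hv p hp)
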